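/- A quadratic form on two generators is a perfect square exactly when its μ-determinant vanishes: there exists a degree-one element L in S with Q = L·L (equivalently, there exist p1, p2 ∈ k with p1² = a, (1+μ)·p1p2 = 2b, and p2² = c) if and only if 4b² − (1+μ)²·ac = 0. -/
import Mathlib


/-- A quadratic form `Q = a·z1² + 2b·z1z2 + c·z2²` on two generators of the skew
polynomial algebra `S` (relation `z2*z1 = μ*z1*z2`) is a perfect square
`Q = L·L` with `L = p1·z1 + p2·z2` (equivalently `p1² = a`,
`(1+μ)·p1·p2 = 2b`, `p2² = c`) if and only if its μ-determinant
`D(M) = 4b² − (1+μ)²·ac` vanishes. -/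
theorem perfectSquare_iff_muDet_eq_zero {k : Type*} [Field k] [IsAlgClosed k]
    (h2 : (2 : k) ≠ 0) (μ : k) (hμ : μ ≠ 0) (a b c : k) :
    (∃ p1 p2 : k, p1 ^ 2 = a ∧ (1 + μ) * p1 * p2 = 2 * b ∧ p2 ^ 2 = c) ↔
      4 * b ^ 2 - (1 + μ) ^ 2 * a * c = 0 := by
  constructor
  · rintro ⟨p1, p2, ha, hb, hc⟩
    have : (2 * b) ^ 2 = ((1 + μ) * p1 * p2) ^ 2 := by rw [hb]
    subst ha hc
    linear_combination (-(2*b) - (1+μ)*p1*p2) * hb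
  · intro hD
    obtain ⟨p1, hp1⟩ := IsAlgClosed.exists_pow_nat_eq a (n := 2) (by norm_num)
    obtain ⟨q2, hq2⟩ := IsAlgClosed.exists_pow_nat_eq c (n := 2) (by norm_num)
    by_cases hν : (1 + μ) = 0
    · have hb0 : b = 0 := by
        have : 4 * b ^ 2 = 0 := by rw [hν] at hD; linear_combination hD
        have h4 : (4 : k) ≠ 0 := by
          have := mul_ne_zero h2 h2; norm_num at this ⊢; exact this
        have := mul_eq_zero.mp this
        rcases this with h | h
        · exact absurd h h4
        · exact pow_eq_zero_iff (by norm_num) |>.mp h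
      exact ⟨p1, q2, hp1, by rw [hν, hb0]; ring, hq2⟩
    · by_cases ha0 : a = 0
      · have hp10 : p1 = 0 := by
          have : p1 ^ 2 = 0 := by rw [hp1, ha0]
          exact pow_eq_zero_iff (by norm_num) |>.mp this
        have hb0 : b = 0 := by
          have h4b : 4 * b ^ 2 = 0 := by rw [ha0] at hD; linear_combination hD
          have h4 : (4 : k) ≠ 0 := by
            have := mul_ne_zero h2 h2; norm_num at this ⊢; exact this
          rcases mul_eq_zero.mp h4b with h | h
          · exact absurd h h4
          · exact pow_eq_zero_iff (by norm_num) |>.mp h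
        exact ⟨p1, q2, hp1, by rw [hp10, hb0]; ring, hq2⟩
      · have hp1n : p1 ≠ 0 := fun h => ha0 (by rw [← hp1, h]; ring)
        refine ⟨p1, 2 * b / ((1 + μ) * p1), hp1, ?_, ?_⟩
        · field_simp
        · field_simp
          linear_combination hD - (1+μ)^2*c*hp1
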